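/- arXiv:2205.07703 — 3 statements merged into one kernel-verified Lean document; each statement's English description precedes it below -/
import Mathlib

section
/- Let g : [0,1] → ℝ be continuous, nondecreasing, and not affine. Then there exist points x, y, z ∈ [0,1] with (½(g(x)+g(y)) − g(z)) · (½(x+y) − z) < 0; consequently, for f(m)(x) = x·g(∫ y dm) on P(𝕋), the measures µ₁ = ½δ_{δ_x} + ½δ_{δ_y} and µ₂ = δ_{δ_z} ∈ P(P(𝕋)) satisfy ∫_{P(𝕋)}∫_𝕋 f̃(µ₁−µ₂)(u) m(du) (µ₁−µ₂)(dm) < 0, so the lifted monotonicity condition fails. -/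
open MeasureTheory

/-- The lifted monotonicity pairing on `P(P(𝕋))` (with `𝕋` identified with `[0,1) ⊂ ℝ`):
`∫∫ f̃(µ₁ − µ₂)(u) m(du) (µ₁ − µ₂)(dm)` where `f̃(µ)(u) = ∫ f(m')(u) µ(dm')`. -/
noncomputable def pairF (f : Measure ℝ → ℝ → ℝ) (μ₁ μ₂ : Measure (Measure ℝ)) : ℝ :=
  (∫ m, (∫ u, ((∫ m', f m' u ∂μ₁) - ∫ m', f m' u ∂μ₂) ∂m) ∂μ₁)
    - ∫ m, (∫ u, ((∫ m', f m' u ∂μ₁) - ∫ m', f m' u ∂μ₂) ∂m) ∂μ₂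

lemma exists_xyz_aux (g : ℝ → ℝ) (hc : ContinuousOn g (Set.Icc 0 1))
    {x y : ℝ} (hx : x ∈ Set.Icc (0:ℝ) 1) (hy : y ∈ Set.Icc (0:ℝ) 1) (hxy : x ≤ y)
    (hne : g x + g y ≠ 2 * g ((x + y) / 2)) :
    ∃ x ∈ Set.Icc (0:ℝ) 1, ∃ y ∈ Set.Icc (0:ℝ) 1, ∃ z ∈ Set.Icc (0:ℝ) 1,
      ((g x + g y) / 2 - g z) * ((x + y) / 2 - z) < 0 := by
  set m : ℝ := (x + y) / 2 with hm
  have hxney : x ≠ y := by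
    intro h
    subst h
    apply hne
    show g x + g x = 2 * g ((x + x) / 2)
    rw [show (x + x) / 2 = x by ring]
    ring
  have hxlty : x < y := lt_of_le_of_ne hxy hxney
  have hxm : x < m := by rw [hm]; linarith
  have hmy : m < y := by rw [hm]; linarith
  have hmIcc : m ∈ Set.Icc (0:ℝ) 1 := ⟨by linarith [hx.1], by linarith [hy.2]⟩
  set A : ℝ := (g x + g y) / 2 with hA
  have cw : ContinuousWithinAt g (Set.Icc 0 1) m := hc m hmIcc
  rcases lt_or_gt_of_ne hne with h | h
  · -- g x + g y < 2 * g m, so A < g m; find z < m with A < g z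
    have hAgm : A < g m := by rw [hA]; linarith
    have ev1 : ∀ᶠ w in nhdsWithin m (Set.Icc (0:ℝ) 1), A < g w :=
      cw (Ioi_mem_nhds hAgm)
    have hsub : Set.Ico x m ⊆ Set.Icc (0:ℝ) 1 := fun w hw =>
      ⟨by linarith [hx.1, hw.1], by linarith [hmIcc.2, hw.2.le]⟩
    have ev1' : ∀ᶠ w in nhdsWithin m (Set.Ico x m), A < g w :=
      ev1.filter_mono (nhdsWithin_mono m hsub)
    have ev2 : ∀ᶠ w in nhdsWithin m (Set.Ico x m), w ∈ Set.Ico x m :=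
      self_mem_nhdsWithin
    have hne2 : (nhdsWithin m (Set.Ico x m)).NeBot := by
      rw [nhdsWithin_Ico_eq_nhdsLT hxm]
      infer_instance
    obtain ⟨z, hz1, hz2⟩ := (ev1'.and ev2).exists
    refine ⟨x, hx, y, hy, z, hsub hz2, ?_⟩
    have h1 : (g x + g y) / 2 - g z < 0 := by rw [hA] at hz1; linarith
    have h2 : 0 < (x + y) / 2 - z := by
      have : z < m := hz2.2
      rw [hm] at this
      linarith
    exact mul_neg_of_neg_of_pos h1 h2
  · -- g x + g y > 2 * g m, so A > g m; find z > m with g z < A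
    have hAgm : g m < A := by rw [hA]; linarith
    have ev1 : ∀ᶠ w in nhdsWithin m (Set.Icc (0:ℝ) 1), g w < A :=
      cw (Iio_mem_nhds hAgm)
    have hsub : Set.Ioc m y ⊆ Set.Icc (0:ℝ) 1 := fun w hw =>
      ⟨by linarith [hmIcc.1, hw.1.le], by linarith [hy.2, hw.2]⟩
    have ev1' : ∀ᶠ w in nhdsWithin m (Set.Ioc m y), g w < A :=
      ev1.filter_mono (nhdsWithin_mono m hsub)
    have ev2 : ∀ᶠ w in nhdsWithin m (Set.Ioc m y), w ∈ Set.Ioc m y :=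
      self_mem_nhdsWithin
    have hne2 : (nhdsWithin m (Set.Ioc m y)).NeBot := by
      rw [nhdsWithin_Ioc_eq_nhdsGT hmy]
      infer_instance
    obtain ⟨z, hz1, hz2⟩ := (ev1'.and ev2).exists
    refine ⟨x, hx, y, hy, z, hsub hz2, ?_⟩
    have h1 : 0 < (g x + g y) / 2 - g z := by rw [hA] at hz1; linarith
    have h2 : (x + y) / 2 - z < 0 := by
      have : m < z := hz2.1
      rw [hm] at this
      linarith
    exact mul_neg_of_pos_of_neg h1 h2

lemma exists_xyz (g : ℝ → ℝ) (hc : ContinuousOn g (Set.Icc 0 1))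
    (hna : ∃ x ∈ Set.Icc (0:ℝ) 1, ∃ y ∈ Set.Icc (0:ℝ) 1, g x + g y ≠ 2 * g ((x + y) / 2)) :
    ∃ x ∈ Set.Icc (0:ℝ) 1, ∃ y ∈ Set.Icc (0:ℝ) 1, ∃ z ∈ Set.Icc (0:ℝ) 1,
      ((g x + g y) / 2 - g z) * ((x + y) / 2 - z) < 0 := by
  obtain ⟨x, hx, y, hy, hne⟩ := hna
  rcases le_total x y with h | h
  · exact exists_xyz_aux g hc hx hy h hne
  · refine exists_xyz_aux g hc hy hx h ?_
    rw [add_comm (g y), add_comm y]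
    exact hne

lemma integrable_dirac' {f : Measure ℝ → ℝ} (hf : Measurable f) (a : Measure ℝ) :
    Integrable f (Measure.dirac a) := by
  refine ⟨hf.stronglyMeasurable.aestronglyMeasurable, ?_⟩
  rw [HasFiniteIntegral]
  rw [lintegral_dirac' a (by measurability : Measurable fun m => (‖f m‖ₑ : ENNReal))]
  exact enorm_lt_top

lemma pair_eval (g : ℝ → ℝ)
    (hI : Measurable fun m : Measure ℝ => ∫ y, y ∂m)
    (hgI : Measurable fun m : Measure ℝ => g (∫ y, y ∂m)) (x y z : ℝ) :
    pairF (fun m u => u * g (∫ y, y ∂m))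
        ((2:ENNReal)⁻¹ • Measure.dirac (Measure.dirac x)
          + (2:ENNReal)⁻¹ • Measure.dirac (Measure.dirac y))
        (Measure.dirac (Measure.dirac z))
      = ((x + y) / 2 - z) * ((g x + g y) / 2 - g z) := by
  have hIx : (∫ v, v ∂(Measure.dirac x)) = x := integral_dirac (fun v => v) x
  have hIy : (∫ v, v ∂(Measure.dirac y)) = y := integral_dirac (fun v => v) y
  have hIz : (∫ v, v ∂(Measure.dirac z)) = z := integral_dirac (fun v => v) z
  set c : ℝ := (g x + g y) / 2 - g z with hc
  have hmeas : ∀ u : ℝ, Measurable fun m : Measure ℝ => u * g (∫ v, v ∂m) :=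
    fun u => hgI.const_mul u
  have htoReal : ((2:ENNReal)⁻¹).toReal = 2⁻¹ := by simp
  -- inner integrals
  have hinner1 : ∀ u : ℝ,
      (∫ m', u * g (∫ v, v ∂m') ∂((2:ENNReal)⁻¹ • Measure.dirac (Measure.dirac x)
          + (2:ENNReal)⁻¹ • Measure.dirac (Measure.dirac y)))
        = u * ((g x + g y) / 2) := by
    intro u
    rw [integral_add_measure
      ((integrable_dirac' (hmeas u) (Measure.dirac x)).smul_measure (by simp))
      ((integrable_dirac' (hmeas u) (Measure.dirac y)).smul_measure (by simp))]
    rw [integral_smul_measure, integral_smul_measure,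
      integral_dirac' _ _ (hmeas u).stronglyMeasurable,
      integral_dirac' _ _ (hmeas u).stronglyMeasurable, hIx, hIy, htoReal,
      smul_eq_mul, smul_eq_mul]
    ring
  have hinner2 : ∀ u : ℝ,
      (∫ m', u * g (∫ v, v ∂m') ∂(Measure.dirac (Measure.dirac z))) = u * g z := by
    intro u
    rw [integral_dirac' _ _ (hmeas u).stronglyMeasurable, hIz]
  have hfun : (fun u : ℝ =>
      (∫ m', u * g (∫ v, v ∂m') ∂((2:ENNReal)⁻¹ • Measure.dirac (Measure.dirac x)
          + (2:ENNReal)⁻¹ • Measure.dirac (Measure.dirac y)))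
        - ∫ m', u * g (∫ v, v ∂m') ∂(Measure.dirac (Measure.dirac z)))
      = fun u : ℝ => u * c := by
    funext u
    rw [hinner1 u, hinner2 u, hc]
    ring
  have hF : ∀ m : Measure ℝ,
      (∫ u, ((∫ m', u * g (∫ v, v ∂m') ∂((2:ENNReal)⁻¹ • Measure.dirac (Measure.dirac x)
          + (2:ENNReal)⁻¹ • Measure.dirac (Measure.dirac y)))
        - ∫ m', u * g (∫ v, v ∂m') ∂(Measure.dirac (Measure.dirac z))) ∂m)
      = (∫ u, u ∂m) * c := by
    intro m
    calc (∫ u, ((∫ m', u * g (∫ v, v ∂m') ∂((2:ENNReal)⁻¹ • Measure.dirac (Measure.dirac x)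
          + (2:ENNReal)⁻¹ • Measure.dirac (Measure.dirac y)))
        - ∫ m', u * g (∫ v, v ∂m') ∂(Measure.dirac (Measure.dirac z))) ∂m)
        = ∫ u, u * c ∂m := by rw [hfun]
      _ = (∫ u, u ∂m) * c := integral_mul_const c _
  have hFmeas : Measurable fun m : Measure ℝ => (∫ u, u ∂m) * c := hI.mul_const c
  rw [pairF]
  simp only [hF]
  rw [integral_add_measure
      ((integrable_dirac' hFmeas (Measure.dirac x)).smul_measure (by simp))
      ((integrable_dirac' hFmeas (Measure.dirac y)).smul_measure (by simp))]
  rw [integral_smul_measure, integral_smul_measure,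
    integral_dirac' _ _ hFmeas.stronglyMeasurable,
    integral_dirac' _ _ hFmeas.stronglyMeasurable,
    integral_dirac' _ _ hFmeas.stronglyMeasurable, hIx, hIy, hIz, htoReal, hc, smul_eq_mul, smul_eq_mul]
  ring

/-- If `g : [0,1] → ℝ` is continuous, nondecreasing and not affine, there are
`x, y, z ∈ [0,1]` with `(½(g(x)+g(y)) − g(z)) (½(x+y) − z) < 0`; consequently, for
`f(m)(u) = u·g(∫ y dm)`, the measures `µ₁ = ½δ_{δ_x} + ½δ_{δ_y}` and `µ₂ = δ_{δ_z}` make the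
lifted monotonicity pairing strictly negative, so the lifted monotonicity condition fails. -/
theorem stmt8 (g : ℝ → ℝ)
    (hc : ContinuousOn g (Set.Icc 0 1)) (hmono : MonotoneOn g (Set.Icc 0 1))
    (hna : ∃ x ∈ Set.Icc (0:ℝ) 1, ∃ y ∈ Set.Icc (0:ℝ) 1, g x + g y ≠ 2 * g ((x + y) / 2))
    (hI : Measurable fun m : Measure ℝ => ∫ y, y ∂m)
    (hgI : Measurable fun m : Measure ℝ => g (∫ y, y ∂m)) :
    ∃ x ∈ Set.Icc (0:ℝ) 1, ∃ y ∈ Set.Icc (0:ℝ) 1, ∃ z ∈ Set.Icc (0:ℝ) 1,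
      ((g x + g y) / 2 - g z) * ((x + y) / 2 - z) < 0 ∧
      pairF (fun m u => u * g (∫ y, y ∂m))
        ((2:ENNReal)⁻¹ • Measure.dirac (Measure.dirac x)
          + (2:ENNReal)⁻¹ • Measure.dirac (Measure.dirac y))
        (Measure.dirac (Measure.dirac z)) < 0 := by
  -- Step 1: find x, y, z with the product negative
  obtain ⟨x, hx, y, hy, z, hz, hprod⟩ := exists_xyz g hc hna
  refine ⟨x, hx, y, hy, z, hz, hprod, ?_⟩
  rw [pair_eval g hI hgI x y z]
  nlinarith [hprod]
end

section
/- Let f : P(𝕋^d) → C(𝕋^d) be continuous (P(𝕋^d) with the d₁-topology, C(𝕋^d) with uniform norm). Then the set 𝒜 := {µ ∈ P(P(𝕋^d)) : ∃ g ∈ C(𝕋^d), f(m) = g for µ-almost every m} is closed, hence compact, in P(P(𝕋^d)). -/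
open MeasureTheory

/-- The `d`-dimensional torus. -/
abbrev Td (d : ℕ) := Fin d → UnitAddCircle

open MeasureTheory Topology TopologicalSpace BoundedContinuousFunction NNReal
open scoped ENNReal

namespace OldRiesz

section RMK

variable {Ω : Type*} [TopologicalSpace Ω] [CompactSpace Ω] [T2Space Ω]

/-- Old Mathlib `rieszContentAux` for bounded continuous functions. -/
noncomputable def rieszContentAux (Λ : (Ω →ᵇ ℝ≥0) →ₗ[ℝ≥0] ℝ≥0) : Compacts Ω → ℝ≥0 := fun K =>
  sInf (Λ '' { f : Ω →ᵇ ℝ≥0 | ∀ x ∈ K, (1 : ℝ≥0) ≤ f x })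

theorem rieszContentAux_image_nonempty (Λ : (Ω →ᵇ ℝ≥0) →ₗ[ℝ≥0] ℝ≥0) (K : Compacts Ω) :
    (Λ '' { f : Ω →ᵇ ℝ≥0 | ∀ x ∈ K, (1 : ℝ≥0) ≤ f x }).Nonempty := by
  rw [Set.image_nonempty]
  use (1 : Ω →ᵇ ℝ≥0)
  intro x _
  simp

theorem rieszContentAux_mono (Λ : (Ω →ᵇ ℝ≥0) →ₗ[ℝ≥0] ℝ≥0) {K₁ K₂ : Compacts Ω} (h : K₁ ≤ K₂) :
    rieszContentAux Λ K₁ ≤ rieszContentAux Λ K₂ :=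
  csInf_le_csInf (OrderBot.bddBelow _) (rieszContentAux_image_nonempty Λ K₂)
    (Set.image_mono (Set.setOf_subset_setOf.mpr fun _ f_hyp x x_in_K₁ => f_hyp x (h x_in_K₁)))

theorem rieszContentAux_le (Λ : (Ω →ᵇ ℝ≥0) →ₗ[ℝ≥0] ℝ≥0) {K : Compacts Ω} {f : Ω →ᵇ ℝ≥0}
    (h : ∀ x ∈ K, (1 : ℝ≥0) ≤ f x) : rieszContentAux Λ K ≤ Λ f :=
  csInf_le (OrderBot.bddBelow _) ⟨f, ⟨h, rfl⟩⟩

theorem exists_lt_rieszContentAux_add_pos (Λ : (Ω →ᵇ ℝ≥0) →ₗ[ℝ≥0] ℝ≥0) (K : Compacts Ω)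
    {ε : ℝ≥0} (εpos : 0 < ε) :
    ∃ f : Ω →ᵇ ℝ≥0, (∀ x ∈ K, (1 : ℝ≥0) ≤ f x) ∧ Λ f < rieszContentAux Λ K + ε := by
  obtain ⟨α, ⟨⟨f, f_hyp⟩, α_hyp⟩⟩ :=
    exists_lt_of_csInf_lt (rieszContentAux_image_nonempty Λ K)
      (lt_add_of_pos_right (rieszContentAux Λ K) εpos)
  refine ⟨f, f_hyp.left, ?_⟩
  rw [f_hyp.right]
  exact α_hyp

theorem rieszContentAux_sup_le (Λ : (Ω →ᵇ ℝ≥0) →ₗ[ℝ≥0] ℝ≥0) (K1 K2 : Compacts Ω) :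
    rieszContentAux Λ (K1 ⊔ K2) ≤ rieszContentAux Λ K1 + rieszContentAux Λ K2 := by
  apply _root_.le_of_forall_pos_le_add
  intro ε εpos
  obtain ⟨f1, f_test_function_K1⟩ := exists_lt_rieszContentAux_add_pos Λ K1 (half_pos εpos)
  obtain ⟨f2, f_test_function_K2⟩ := exists_lt_rieszContentAux_add_pos Λ K2 (half_pos εpos)
  have f_test_function_union : ∀ x ∈ K1 ⊔ K2, (1 : ℝ≥0) ≤ (f1 + f2) x := by
    rintro x (x_in_K1 | x_in_K2)
    · exact le_add_right (f_test_function_K1.left x x_in_K1)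
    · exact le_add_left (f_test_function_K2.left x x_in_K2)
  apply (rieszContentAux_le Λ f_test_function_union).trans (le_of_lt _)
  rw [map_add]
  apply lt_of_lt_of_le (_root_.add_lt_add f_test_function_K1.right f_test_function_K2.right)
    (le_of_eq _)
  rw [add_assoc, add_comm (ε / 2), add_assoc, add_halves ε, add_assoc]

lemma layer_sum (δ t : ℝ≥0) : ∀ n : ℕ, ∑ i ∈ Finset.range n, min δ (t - (i : ℝ≥0) * δ)
    = min ((n : ℝ≥0) * δ) t := by
  intro n
  induction n with
  | zero => simp
  | succ n ih =>
    rw [Finset.sum_range_succ, ih]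
    have hcast : ((n + 1 : ℕ) : ℝ≥0) * δ = (n : ℝ≥0) * δ + δ := by push_cast; ring
    rcases le_total t ((n : ℝ≥0) * δ) with h | h
    · rw [min_eq_right h, tsub_eq_zero_of_le h, min_eq_right zero_le, add_zero,
        min_eq_right (h.trans (by rw [hcast]; exact le_self_add))]
    · rw [min_eq_left h, hcast, ← min_add_add_left, add_tsub_cancel_of_le h]

/-- The Riesz content associated to a positive linear functional on a compact Hausdorff space. -/
noncomputable def rieszContent (Λ : (Ω →ᵇ ℝ≥0) →ₗ[ℝ≥0] ℝ≥0) : Content Ω where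
  toFun := rieszContentAux Λ
  mono' := fun _ _ h => rieszContentAux_mono Λ h
  sup_le' := rieszContentAux_sup_le Λ
  sup_disjoint' := by
    intro K₁ K₂ hdis _ _
    refine le_antisymm (rieszContentAux_sup_le Λ K₁ K₂) ?_
    refine le_csInf (rieszContentAux_image_nonempty Λ (K₁ ⊔ K₂)) ?_
    rintro b ⟨f, hf, rfl⟩
    obtain ⟨g, hg₁, hg₂, hg01⟩ := exists_continuous_zero_one_of_isClosed
      K₁.isCompact.isClosed K₂.isCompact.isClosed hdis
    set u : Ω →ᵇ ℝ≥0 := mkOfCompact ⟨fun x => f x * Real.toNNReal (1 - g x),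
      ((map_continuous f).mul (continuous_real_toNNReal.comp (continuous_const.sub (map_continuous g))))⟩ with hu
    set v : Ω →ᵇ ℝ≥0 := mkOfCompact ⟨fun x => f x * Real.toNNReal (g x),
      ((map_continuous f).mul (continuous_real_toNNReal.comp (map_continuous g)))⟩ with hv
    have huv : u + v = f := by
      refine BoundedContinuousFunction.ext fun x => ?_
      have h0 : (0:ℝ) ≤ g x := (hg01 x).1
      have h1 : (0:ℝ) ≤ 1 - g x := by linarith [(hg01 x).2]
      rw [BoundedContinuousFunction.add_apply]
      simp only [hu, hv, mkOfCompact_apply, ContinuousMap.coe_mk]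
      rw [← mul_add, ← Real.toNNReal_add h1 h0, sub_add_cancel, Real.toNNReal_one, mul_one]
    have hK₁ : ∀ x ∈ K₁, 1 ≤ u x := by
      intro x hx
      have : g x = 0 := hg₁ hx
      simp only [hu, mkOfCompact_apply, ContinuousMap.coe_mk, this, sub_zero, Real.toNNReal_one,
        mul_one]
      exact hf x (Or.inl hx)
    have hK₂ : ∀ x ∈ K₂, 1 ≤ v x := by
      intro x hx
      have : g x = 1 := hg₂ hx
      simp only [hv, mkOfCompact_apply, ContinuousMap.coe_mk, this, Real.toNNReal_one, mul_one]
      exact hf x (Or.inr hx)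
    calc rieszContentAux Λ K₁ + rieszContentAux Λ K₂
        ≤ Λ u + Λ v := add_le_add (rieszContentAux_le Λ hK₁) (rieszContentAux_le Λ hK₂)
      _ = Λ (u + v) := (map_add Λ u v).symm
      _ = Λ f := by rw [huv]

lemma rieszContentAux_le_one (Λ : (Ω →ᵇ ℝ≥0) →ₗ[ℝ≥0] ℝ≥0) (K : Compacts Ω) :
    rieszContentAux Λ K ≤ Λ 1 :=
  rieszContentAux_le Λ (fun x _ => by simp)

lemma rieszContent_regular (Λ : (Ω →ᵇ ℝ≥0) →ₗ[ℝ≥0] ℝ≥0) (hone : Λ 1 = 1) :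
    (rieszContent Λ).ContentRegular := by
  intro K
  refine le_antisymm (le_iInf₂ fun K' hK' => ?_) ?_
  · exact ENNReal.coe_le_coe.mpr <| rieszContentAux_mono Λ (hK'.trans interior_subset)
  · refine ENNReal.le_of_forall_pos_le_add fun ε hε _ => ?_
    set ε₂ : ℝ≥0 := ε / 2 with hε₂def
    have hε₂ : 0 < ε₂ := by positivity
    obtain ⟨f, hf, hΛf⟩ := exists_lt_rieszContentAux_add_pos Λ K hε₂
    set η : ℝ≥0 := ε₂ / (1 + ε₂) with hηdef
    have hη : 0 < η := by positivity
    set K' : Compacts Ω := ⟨{x | (1 + η)⁻¹ ≤ f x},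
      (isClosed_le continuous_const (map_continuous f)).isCompact⟩ with hK'def
    have hsub : (K : Set Ω) ⊆ interior (K' : Set Ω) := by
      have h1 : (1 + η)⁻¹ < 1 := by
        rw [inv_lt_one_iff₀]
        right
        exact lt_add_of_pos_right 1 hη
      set U : Set Ω := {x | (1 + η)⁻¹ < f x} with hUdef
      have hUopen : IsOpen U := by
        have hfc : Continuous fun x => f x := map_continuous f
        exact isOpen_lt continuous_const hfc
      have hKU : (K : Set Ω) ⊆ U := fun x hx => lt_of_lt_of_le h1 (hf x hx)
      have hUK' : U ⊆ (K' : Set Ω) := fun x hx => by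
        show (1 + η)⁻¹ ≤ f x
        exact le_of_lt hx
      exact hKU.trans (interior_maximal hUK' hUopen)
    refine le_trans (iInf₂_le K' hsub) ?_
    show (rieszContentAux Λ K' : ℝ≥0∞) ≤ (rieszContentAux Λ K : ℝ≥0∞) + ε
    rw [← ENNReal.coe_add]
    refine ENNReal.coe_le_coe.mpr ?_
    have hK'le : rieszContentAux Λ K' ≤ (1 + η) * Λ f := by
      have : (1 + η) * Λ f = Λ ((1 + η) • f) := by rw [_root_.map_smul, smul_eq_mul]
      rw [this]
      refine rieszContentAux_le Λ ?_
      intro x hx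
      have hx' : (1 + η)⁻¹ ≤ f x := hx
      calc (1:ℝ≥0) = (1 + η) * (1 + η)⁻¹ := by
            rw [mul_inv_cancel₀]; positivity
        _ ≤ (1 + η) * f x := mul_le_mul_right hx' _
        _ = ((1 + η) • f) x := rfl
    have hΛ1 : Λ f ≤ 1 + ε₂ := by
      calc Λ f ≤ rieszContentAux Λ K + ε₂ := hΛf.le
        _ ≤ Λ 1 + ε₂ := add_le_add_left (rieszContentAux_le_one Λ K) _
        _ = 1 + ε₂ := by rw [hone]
    have hne : (1 : ℝ≥0) + ε₂ ≠ 0 := by positivity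
    calc rieszContentAux Λ K' ≤ (1 + η) * Λ f := hK'le
      _ = Λ f + η * Λ f := by ring
      _ ≤ (rieszContentAux Λ K + ε₂) + η * (1 + ε₂) :=
          add_le_add hΛf.le (mul_le_mul_right hΛ1 η)
      _ = rieszContentAux Λ K + ε₂ + ε₂ := by rw [hηdef, div_mul_cancel₀ _ hne]
      _ = rieszContentAux Λ K + ε := by rw [add_assoc, hε₂def, add_halves]




variable [MeasurableSpace Ω] [BorelSpace Ω]

theorem exists_probabilityMeasure_of_functional (Λ : (Ω →ᵇ ℝ≥0) →ₗ[ℝ≥0] ℝ≥0)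
    (hmono : ∀ f g : Ω →ᵇ ℝ≥0, ⇑f ≤ ⇑g → Λ f ≤ Λ g) (hone : Λ 1 = 1) :
    ∃ μ : ProbabilityMeasure Ω, ∀ f : Ω →ᵇ ℝ≥0, μ.toFiniteMeasure.testAgainstNN f = Λ f := by
  set μ₀ : Measure Ω := (rieszContent Λ).measure with hμ₀def
  have hK : ∀ K : Compacts Ω, μ₀ (K : Set Ω) = (rieszContentAux Λ K : ℝ≥0∞) :=
    fun K => Content.measure_eq_content_of_regular _ (rieszContent_regular Λ hone) K
  have htop : rieszContentAux Λ ⊤ = 1 := by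
    refine le_antisymm (by simpa [hone] using rieszContentAux_le_one Λ ⊤) ?_
    refine le_csInf (rieszContentAux_image_nonempty Λ ⊤) ?_
    rintro b ⟨f, hf, rfl⟩
    rw [← hone]
    exact hmono 1 f fun x => hf x trivial
  have huniv : μ₀ Set.univ = 1 := by
    have h' : ((⊤ : Compacts Ω) : Set Ω) = Set.univ := rfl
    rw [← h', hK ⊤, htop, ENNReal.coe_one]
  haveI : IsProbabilityMeasure μ₀ := ⟨huniv⟩
  have key : ∀ f : Ω →ᵇ ℝ≥0, ∫⁻ x, (f x : ℝ≥0∞) ∂μ₀ = (Λ f : ℝ≥0∞) := by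
    intro f
    set B : ℝ≥0 := nndist f 0 + 1 with hBdef
    have hB : B ≠ 0 := by
      rw [hBdef]
      positivity
    have hfB : ∀ x, f x ≤ B := by
      intro x
      have h1 : dist (f x) ((0 : Ω →ᵇ ℝ≥0) x) ≤ dist f 0 :=
        BoundedContinuousFunction.dist_coe_le_dist x
      have h2 : dist (f x) ((0 : Ω →ᵇ ℝ≥0) x) = ((f x : ℝ≥0) : ℝ) := by
        simp [NNReal.dist_eq]
      rw [h2] at h1
      have h3 : (f x : ℝ≥0) ≤ nndist f 0 := by
        rw [← NNReal.coe_le_coe]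
        exact h1.trans_eq (dist_nndist f 0)
      exact h3.trans le_self_add
    have main : ∀ n : ℕ, 0 < n →
        ∫⁻ x, (f x : ℝ≥0∞) ∂μ₀ ≤ (Λ f : ℝ≥0∞) + ((B / n : ℝ≥0) : ℝ≥0∞) ∧
        (Λ f : ℝ≥0∞) ≤ (∫⁻ x, (f x : ℝ≥0∞) ∂μ₀) + ((B / n : ℝ≥0) : ℝ≥0∞) := by
      intro n hn
      have hn' : (n : ℝ≥0) ≠ 0 := Nat.cast_ne_zero.mpr hn.ne'
      set δ : ℝ≥0 := B / n with hδdef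
      have hδ : δ ≠ 0 := by
        rw [hδdef]
        exact div_ne_zero hB hn'
      have hnδ : (n : ℝ≥0) * δ = B := by
        rw [hδdef, ← mul_div_assoc, mul_comm, mul_div_assoc, div_self hn', mul_one]
      set K : ℕ → Compacts Ω := fun i =>
        ⟨{x | (i : ℝ≥0) * δ ≤ f x},
          (isClosed_le continuous_const (map_continuous f)).isCompact⟩ with hKdef
      set g : ℕ → Ω →ᵇ ℝ≥0 := fun i => mkOfCompact
        ⟨fun x => min δ (f x - (i : ℝ≥0) * δ),
          continuous_const.min ((map_continuous f).sub continuous_const)⟩ with hgdef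
      have hgapp : ∀ i x, g i x = min δ (f x - (i : ℝ≥0) * δ) := fun i x => rfl
      have hsum : ∑ i ∈ Finset.range n, g i = f := by
        refine BoundedContinuousFunction.ext fun x => ?_
        have h2 : (∑ i ∈ Finset.range n, g i) x = ∑ i ∈ Finset.range n, g i x := by
          simp
        rw [h2]
        simp only [hgapp]
        rw [layer_sum δ (f x) n, hnδ, min_eq_right (hfB x)]
      have hsumx : ∀ x, (f x : ℝ≥0) = ∑ i ∈ Finset.range n, g i x := by
        intro x
        conv_lhs => rw [← hsum]
        simp
      have hg_le : ∀ i x, g i x ≤ δ := fun i x => min_le_left _ _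
      have hg_eq : ∀ i x, x ∈ K (i + 1) → g i x = δ := by
        intro i x hx
        rw [hgapp]
        refine min_eq_left (le_tsub_of_add_le_left ?_)
        calc (i : ℝ≥0) * δ + δ = ((i + 1 : ℕ) : ℝ≥0) * δ := by push_cast; ring
          _ ≤ f x := hx
      have hg_zero : ∀ i x, x ∉ K i → g i x = 0 := by
        intro i x hx
        have hfx : f x ≤ (i : ℝ≥0) * δ := le_of_not_ge hx
        rw [hgapp, tsub_eq_zero_of_le hfx]
        exact min_eq_right zero_le
      have hΛupper : ∀ i, Λ (g i) ≤ δ * rieszContentAux Λ (K i) := by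
        intro i
        have hdiv : Λ (g i) / δ ≤ rieszContentAux Λ (K i) := by
          refine le_csInf (rieszContentAux_image_nonempty Λ (K i)) ?_
          rintro b ⟨h, hh, rfl⟩
          rw [div_le_iff₀ (zero_lt_iff.mpr hδ)]
          have hmgi : Λ (g i) ≤ Λ (δ • h) := by
            refine hmono _ _ fun x => ?_
            by_cases hx : x ∈ K i
            · calc g i x ≤ δ := hg_le i x
                _ = δ * 1 := (mul_one δ).symm
                _ ≤ δ * h x := mul_le_mul_right (hh x hx) δ
                _ = (δ • h) x := rfl
            · rw [hg_zero i x hx]; exact zero_le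
          calc Λ (g i) ≤ Λ (δ • h) := hmgi
            _ = δ * Λ h := by rw [_root_.map_smul, smul_eq_mul]
            _ = Λ h * δ := mul_comm _ _
        calc Λ (g i) = Λ (g i) / δ * δ := (div_mul_cancel₀ _ hδ).symm
          _ ≤ rieszContentAux Λ (K i) * δ := mul_le_mul_left hdiv δ
          _ = δ * rieszContentAux Λ (K i) := mul_comm _ _
      have hΛlower : ∀ i, δ * rieszContentAux Λ (K (i + 1)) ≤ Λ (g i) := by
        intro i
        have hle : rieszContentAux Λ (K (i + 1)) ≤ Λ (δ⁻¹ • g i) := by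
          refine rieszContentAux_le Λ fun x hx => ?_
          have happ : (δ⁻¹ • g i) x = δ⁻¹ * g i x := rfl
          rw [happ, hg_eq i x hx, inv_mul_cancel₀ hδ]
        calc δ * rieszContentAux Λ (K (i + 1)) ≤ δ * Λ (δ⁻¹ • g i) := mul_le_mul_right hle δ
          _ = δ * (δ⁻¹ * Λ (g i)) := by rw [_root_.map_smul, smul_eq_mul]
          _ = Λ (g i) := by rw [mul_inv_cancel_left₀ hδ]
      have hΛf_le : Λ f ≤ ∑ i ∈ Finset.range n, δ * rieszContentAux Λ (K i) := by
        conv_lhs => rw [← hsum]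
        rw [map_sum]
        exact Finset.sum_le_sum fun i _ => hΛupper i
      have hle_Λf : ∑ i ∈ Finset.range n, δ * rieszContentAux Λ (K (i + 1)) ≤ Λ f := by
        conv_rhs => rw [← hsum]
        rw [map_sum]
        exact Finset.sum_le_sum fun i _ => hΛlower i
      have hmeas : ∀ j, MeasurableSet ((K j : Set Ω)) :=
        fun j => (K j).isCompact.isClosed.measurableSet
      have hint_eq : ∀ j : ℕ, ∫⁻ x, ((K j : Set Ω)).indicator (fun _ => (δ : ℝ≥0∞)) x ∂μ₀
          = (δ : ℝ≥0∞) * (rieszContentAux Λ (K j) : ℝ≥0∞) := by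
        intro j
        rw [lintegral_indicator_const (hmeas j), hK (K j)]
      have hint_le : ∫⁻ x, (f x : ℝ≥0∞) ∂μ₀
          ≤ ∑ i ∈ Finset.range n, (δ : ℝ≥0∞) * (rieszContentAux Λ (K i) : ℝ≥0∞) := by
        have hpt : ∀ x, (f x : ℝ≥0∞)
            ≤ ∑ i ∈ Finset.range n, ((K i : Set Ω)).indicator (fun _ => (δ : ℝ≥0∞)) x := by
          intro x
          rw [hsumx x]
          push_cast
          refine Finset.sum_le_sum fun i _ => ?_
          by_cases hx : x ∈ K i
          · rw [Set.indicator_of_mem hx]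
            exact ENNReal.coe_le_coe.mpr (hg_le i x)
          · rw [hg_zero i x hx, Set.indicator_of_notMem hx]
            simp
        calc ∫⁻ x, (f x : ℝ≥0∞) ∂μ₀
            ≤ ∫⁻ x, ∑ i ∈ Finset.range n, ((K i : Set Ω)).indicator (fun _ => (δ:ℝ≥0∞)) x ∂μ₀ :=
              lintegral_mono hpt
          _ = ∑ i ∈ Finset.range n, ∫⁻ x, ((K i : Set Ω)).indicator (fun _ => (δ:ℝ≥0∞)) x ∂μ₀ :=
              lintegral_finset_sum _ fun i _ => (measurable_const.indicator (hmeas i))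
          _ = ∑ i ∈ Finset.range n, (δ : ℝ≥0∞) * (rieszContentAux Λ (K i) : ℝ≥0∞) :=
              Finset.sum_congr rfl fun i _ => hint_eq i
      have hle_int : ∑ i ∈ Finset.range n, (δ : ℝ≥0∞) * (rieszContentAux Λ (K (i + 1)) : ℝ≥0∞)
          ≤ ∫⁻ x, (f x : ℝ≥0∞) ∂μ₀ := by
        have hpt : ∀ x, ∑ i ∈ Finset.range n, ((K (i+1) : Set Ω)).indicator (fun _ => (δ:ℝ≥0∞)) x
            ≤ (f x : ℝ≥0∞) := by
          intro x
          rw [hsumx x]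
          push_cast
          refine Finset.sum_le_sum fun i _ => ?_
          by_cases hx : x ∈ K (i + 1)
          · rw [Set.indicator_of_mem hx, hg_eq i x hx]
          · rw [Set.indicator_of_notMem hx]
            simp
        calc ∑ i ∈ Finset.range n, (δ : ℝ≥0∞) * (rieszContentAux Λ (K (i+1)) : ℝ≥0∞)
            = ∑ i ∈ Finset.range n, ∫⁻ x, ((K (i+1) : Set Ω)).indicator (fun _ => (δ:ℝ≥0∞)) x ∂μ₀
              := (Finset.sum_congr rfl fun i _ => (hint_eq (i+1)).symm)
          _ = ∫⁻ x, ∑ i ∈ Finset.range n, ((K (i+1) : Set Ω)).indicator (fun _ => (δ:ℝ≥0∞)) x ∂μ₀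
              := (lintegral_finset_sum _ fun i _ => (measurable_const.indicator (hmeas (i+1)))).symm
          _ ≤ ∫⁻ x, (f x : ℝ≥0∞) ∂μ₀ := lintegral_mono hpt
      have hgap : ∑ i ∈ Finset.range n, (δ : ℝ≥0∞) * (rieszContentAux Λ (K i) : ℝ≥0∞)
          ≤ (∑ i ∈ Finset.range n, (δ : ℝ≥0∞) * (rieszContentAux Λ (K (i+1)) : ℝ≥0∞))
            + (δ : ℝ≥0∞) := by
        obtain ⟨m, rfl⟩ := Nat.exists_eq_succ_of_ne_zero hn.ne'
        rw [Finset.sum_range_succ'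
          (fun i => (δ : ℝ≥0∞) * (rieszContentAux Λ (K i) : ℝ≥0∞)) m]
        have h0 : (δ : ℝ≥0∞) * (rieszContentAux Λ (K 0) : ℝ≥0∞) ≤ (δ : ℝ≥0∞) := by
          calc (δ : ℝ≥0∞) * (rieszContentAux Λ (K 0) : ℝ≥0∞) ≤ (δ : ℝ≥0∞) * 1 := by
                refine mul_le_mul_right ?_ _
                have h1 : rieszContentAux Λ (K 0) ≤ 1 :=
                  htop ▸ rieszContentAux_mono Λ (Set.subset_univ _)
                exact_mod_cast h1
            _ = δ := mul_one _
        refine add_le_add ?_ h0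
        exact Finset.sum_le_sum_of_subset (Finset.range_subset_range.mpr (Nat.le_succ m))
      have hSle : ((∑ i ∈ Finset.range n, δ * rieszContentAux Λ (K (i+1)) : ℝ≥0) : ℝ≥0∞)
          = ∑ i ∈ Finset.range n, (δ : ℝ≥0∞) * (rieszContentAux Λ (K (i+1)) : ℝ≥0∞) := by
        push_cast
        rfl
      have hS0 : ((∑ i ∈ Finset.range n, δ * rieszContentAux Λ (K i) : ℝ≥0) : ℝ≥0∞)
          = ∑ i ∈ Finset.range n, (δ : ℝ≥0∞) * (rieszContentAux Λ (K i) : ℝ≥0∞) := by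
        push_cast
        rfl
      constructor
      · calc ∫⁻ x, (f x : ℝ≥0∞) ∂μ₀
            ≤ ∑ i ∈ Finset.range n, (δ : ℝ≥0∞) * (rieszContentAux Λ (K i) : ℝ≥0∞) := hint_le
          _ ≤ (∑ i ∈ Finset.range n, (δ : ℝ≥0∞) * (rieszContentAux Λ (K (i+1)) : ℝ≥0∞))
              + (δ : ℝ≥0∞) := hgap
          _ ≤ (Λ f : ℝ≥0∞) + (δ : ℝ≥0∞) := by
              refine add_le_add_left ?_ _
              rw [← hSle]
              exact ENNReal.coe_le_coe.mpr hle_Λf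
      · calc (Λ f : ℝ≥0∞)
            ≤ ((∑ i ∈ Finset.range n, δ * rieszContentAux Λ (K i) : ℝ≥0) : ℝ≥0∞) :=
              ENNReal.coe_le_coe.mpr hΛf_le
          _ = ∑ i ∈ Finset.range n, (δ : ℝ≥0∞) * (rieszContentAux Λ (K i) : ℝ≥0∞) := hS0
          _ ≤ (∑ i ∈ Finset.range n, (δ : ℝ≥0∞) * (rieszContentAux Λ (K (i+1)) : ℝ≥0∞))
              + (δ : ℝ≥0∞) := hgap
          _ ≤ (∫⁻ x, (f x : ℝ≥0∞) ∂μ₀) + (δ : ℝ≥0∞) := add_le_add_left hle_int _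
    have hbound : ∀ ε : ℝ≥0, 0 < ε → ∃ n : ℕ, 0 < n ∧ (B / n : ℝ≥0) ≤ ε := by
      intro ε hε
      obtain ⟨n, hn⟩ := exists_nat_gt (B / ε : ℝ≥0)
      have hn0 : 0 < n := by
        by_contra h
        push_neg at h
        interval_cases n
        simp at hn
      refine ⟨n, hn0, ?_⟩
      rw [div_le_iff₀ (show (0:ℝ≥0) < n by exact_mod_cast hn0)]
      calc B = (B / ε) * ε := (div_mul_cancel₀ _ hε.ne').symm
        _ ≤ (n : ℝ≥0) * ε := mul_le_mul_left hn.le _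
        _ = ε * n := mul_comm _ _
    refine le_antisymm ?_ ?_
    · refine ENNReal.le_of_forall_pos_le_add fun ε hε _ => ?_
      obtain ⟨n, hn0, hnε⟩ := hbound ε hε
      exact ((main n hn0).1).trans (add_le_add_right (ENNReal.coe_le_coe.mpr hnε) _)
    · refine ENNReal.le_of_forall_pos_le_add fun ε hε _ => ?_
      obtain ⟨n, hn0, hnε⟩ := hbound ε hε
      exact ((main n hn0).2).trans (add_le_add_right (ENNReal.coe_le_coe.mpr hnε) _)
  refine ⟨⟨μ₀, inferInstance⟩, fun f => ?_⟩
  show (∫⁻ x, (f x : ℝ≥0∞) ∂μ₀).toNNReal = Λ f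
  rw [key f, ENNReal.toNNReal_coe]

end RMK

end OldRiesz

open OldRiesz

section Prokhorov

open MeasureTheory Topology TopologicalSpace BoundedContinuousFunction NNReal
open scoped ENNReal

variable {Ω : Type*} [TopologicalSpace Ω] [CompactSpace Ω] [T2Space Ω]
  [MeasurableSpace Ω] [BorelSpace Ω] [HasOuterApproxClosed Ω]

theorem compactSpace_probabilityMeasure : CompactSpace (ProbabilityMeasure Ω) := by
  set T : ProbabilityMeasure Ω → ((Ω →ᵇ ℝ≥0) → ℝ≥0) :=
    fun μ f => μ.toFiniteMeasure.testAgainstNN f with hTdef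
  have hT : IsInducing T := by
    have h1 : IsInducing (fun φ : WeakDual ℝ≥0 (Ω →ᵇ ℝ≥0) => (⇑φ : (Ω →ᵇ ℝ≥0) → ℝ≥0)) := ⟨rfl⟩
    have h2 : IsInducing (FiniteMeasure.toWeakDualBCNN : FiniteMeasure Ω → _) := ⟨rfl⟩
    have h3 : IsInducing (ProbabilityMeasure.toFiniteMeasure : ProbabilityMeasure Ω → _) :=
      (ProbabilityMeasure.toFiniteMeasure_isEmbedding Ω).toIsInducing
    exact (h1.comp (h2.comp h3))
  constructor
  rw [hT.isCompact_iff, Set.image_univ]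
  have hsub : Set.range T ⊆ Set.univ.pi (fun f : Ω →ᵇ ℝ≥0 => Set.Icc 0 (nndist f 0)) := by
    rintro _ ⟨μ, rfl⟩ f _
    refine ⟨zero_le, ?_⟩
    calc μ.toFiniteMeasure.testAgainstNN f
        ≤ μ.toFiniteMeasure.testAgainstNN (BoundedContinuousFunction.const Ω (nndist f 0)) := by
          refine FiniteMeasure.testAgainstNN_mono _ fun x => ?_
          have h1 : dist (f x) ((0 : Ω →ᵇ ℝ≥0) x) ≤ dist f 0 :=
            BoundedContinuousFunction.dist_coe_le_dist x
          have h2 : dist (f x) ((0 : Ω →ᵇ ℝ≥0) x) = ((f x : ℝ≥0) : ℝ) := by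
            simp [NNReal.dist_eq]
          rw [h2] at h1
          have h3 : (f x : ℝ≥0) ≤ nndist f 0 := by
            rw [← NNReal.coe_le_coe]
            exact h1.trans_eq (dist_nndist f 0)
          simpa using h3
      _ = nndist f 0 * μ.toFiniteMeasure.mass := FiniteMeasure.testAgainstNN_const _ _
      _ = nndist f 0 := by simp
  have hrange : Set.range T = {φ : (Ω →ᵇ ℝ≥0) → ℝ≥0 |
      (∀ f g, φ (f + g) = φ f + φ g) ∧ (∀ (c : ℝ≥0) f, φ (c • f) = c * φ f) ∧
      (∀ f g : Ω →ᵇ ℝ≥0, ⇑f ≤ ⇑g → φ f ≤ φ g) ∧ φ 1 = 1} := by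
    apply Set.Subset.antisymm
    · rintro _ ⟨μ, rfl⟩
      refine ⟨fun f g => FiniteMeasure.testAgainstNN_add _ f g,
        fun c f => ?_, fun f g h => FiniteMeasure.testAgainstNN_mono _ h, ?_⟩
      · have := FiniteMeasure.testAgainstNN_smul μ.toFiniteMeasure c f
        simpa [smul_eq_mul] using this
      · show μ.toFiniteMeasure.testAgainstNN 1 = 1
        rw [FiniteMeasure.testAgainstNN_one]
        simp
    · rintro φ ⟨hadd, hsmul, hmono, hone⟩
      set Λ : (Ω →ᵇ ℝ≥0) →ₗ[ℝ≥0] ℝ≥0 :=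
        { toFun := φ, map_add' := hadd, map_smul' := fun c f => by simp [hsmul c f] }
      obtain ⟨μ, hμ⟩ := exists_probabilityMeasure_of_functional Λ hmono hone
      exact ⟨μ, funext fun f => hμ f⟩
  have hclosed : IsClosed (Set.range T) := by
    rw [hrange]
    have e1 : IsClosed {φ : (Ω →ᵇ ℝ≥0) → ℝ≥0 | ∀ f g, φ (f + g) = φ f + φ g} := by
      simp only [Set.setOf_forall]
      refine isClosed_iInter fun f => isClosed_iInter fun g => ?_
      exact isClosed_eq (continuous_apply _) ((continuous_apply f).add (continuous_apply g))
    have e2 : IsClosed {φ : (Ω →ᵇ ℝ≥0) → ℝ≥0 | ∀ (c : ℝ≥0) f, φ (c • f) = c * φ f} := by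
      simp only [Set.setOf_forall]
      refine isClosed_iInter fun c => isClosed_iInter fun f => ?_
      exact isClosed_eq (continuous_apply _) (continuous_const.mul (continuous_apply f))
    have e3 : IsClosed {φ : (Ω →ᵇ ℝ≥0) → ℝ≥0 | ∀ f g : Ω →ᵇ ℝ≥0, ⇑f ≤ ⇑g → φ f ≤ φ g} := by
      simp only [Set.setOf_forall]
      refine isClosed_iInter fun f => isClosed_iInter fun g => isClosed_iInter fun _ => ?_
      exact isClosed_le (continuous_apply f) (continuous_apply g)
    have e4 : IsClosed {φ : (Ω →ᵇ ℝ≥0) → ℝ≥0 | φ 1 = 1} :=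
      isClosed_eq (continuous_apply _) continuous_const
    have hset : {φ : (Ω →ᵇ ℝ≥0) → ℝ≥0 |
        (∀ f g, φ (f + g) = φ f + φ g) ∧ (∀ (c : ℝ≥0) f, φ (c • f) = c * φ f) ∧
        (∀ f g : Ω →ᵇ ℝ≥0, ⇑f ≤ ⇑g → φ f ≤ φ g) ∧ φ 1 = 1}
        = {φ : (Ω →ᵇ ℝ≥0) → ℝ≥0 | ∀ f g, φ (f + g) = φ f + φ g}
          ∩ ({φ | ∀ (c : ℝ≥0) f, φ (c • f) = c * φ f}
          ∩ ({φ | ∀ f g : Ω →ᵇ ℝ≥0, ⇑f ≤ ⇑g → φ f ≤ φ g} ∩ {φ | φ 1 = 1})) := by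
      ext φ
      simp [Set.mem_inter_iff, and_assoc]
    rw [hset]
    exact e1.inter (e2.inter (e3.inter e4))
  exact (isCompact_univ_pi fun f => isCompact_Icc).of_isClosed_subset hclosed hsub

end Prokhorov

/-- For a continuous `f : P(𝕋^d) → C(𝕋^d)`, the set
`𝒜 = {µ ∈ P(P(𝕋^d)) : ∃ g ∈ C(𝕋^d), f(m) = g for µ-a.e. m}` is closed, hence compact,
in `P(P(𝕋^d))` (with its weak topology, the one of the Kantorovich–Rubinstein distance). -/
theorem stmt9 {d : ℕ} (f : ProbabilityMeasure (Td d) → C(Td d, ℝ)) (hf : Continuous f) :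
    letI : MeasurableSpace (ProbabilityMeasure (Td d)) := borel _
    haveI : BorelSpace (ProbabilityMeasure (Td d)) := ⟨rfl⟩
    IsClosed {μ : ProbabilityMeasure (ProbabilityMeasure (Td d)) |
        ∃ g : C(Td d, ℝ), ∀ᵐ m ∂(μ : Measure (ProbabilityMeasure (Td d))), f m = g} ∧
      IsCompact {μ : ProbabilityMeasure (ProbabilityMeasure (Td d)) |
        ∃ g : C(Td d, ℝ), ∀ᵐ m ∂(μ : Measure (ProbabilityMeasure (Td d))), f m = g} := by
  letI : MeasurableSpace (ProbabilityMeasure (Td d)) := borel _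
  haveI : BorelSpace (ProbabilityMeasure (Td d)) := ⟨rfl⟩
  haveI hYc : CompactSpace (ProbabilityMeasure (Td d)) := compactSpace_probabilityMeasure
  haveI hYYc : CompactSpace (ProbabilityMeasure (ProbabilityMeasure (Td d))) :=
    compactSpace_probabilityMeasure
  -- bounded continuous test functions
  set h : Td d → (ProbabilityMeasure (Td d) →ᵇ ℝ) := fun x => mkOfCompact
    ⟨fun m => f m x, (continuous_eval_const x).comp hf⟩ with hhdef
  set hsq : Td d → (ProbabilityMeasure (Td d) →ᵇ ℝ) := fun x => mkOfCompact
    ⟨fun m => (f m x) ^ 2, ((continuous_eval_const x).comp hf).pow 2⟩ with hsqdef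
  have happ : ∀ x m, h x m = f m x := fun x m => rfl
  have hsqapp : ∀ x m, hsq x m = (f m x) ^ 2 := fun x m => rfl
  have hIcont : ∀ b : ProbabilityMeasure (Td d) →ᵇ ℝ,
      Continuous fun μ : ProbabilityMeasure (ProbabilityMeasure (Td d)) =>
        ∫ m, b m ∂(μ : Measure (ProbabilityMeasure (Td d))) := by
    intro b
    rw [continuous_iff_continuousAt]
    intro μ
    exact (ProbabilityMeasure.tendsto_iff_forall_integral_tendsto.mp Filter.tendsto_id) b
  obtain ⟨D, hDcnt, hDdense⟩ := TopologicalSpace.exists_countable_dense (Td d)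
  have hset : {μ : ProbabilityMeasure (ProbabilityMeasure (Td d)) |
      ∃ g : C(Td d, ℝ), ∀ᵐ m ∂(μ : Measure (ProbabilityMeasure (Td d))), f m = g}
      = ⋂ x ∈ D, {μ : ProbabilityMeasure (ProbabilityMeasure (Td d)) |
          ∫ m, hsq x m ∂(μ : Measure (ProbabilityMeasure (Td d)))
          = (∫ m, h x m ∂(μ : Measure (ProbabilityMeasure (Td d)))) ^ 2} := by
    ext μ
    simp only [Set.mem_setOf_eq, Set.mem_iInter]
    constructor
    · rintro ⟨g, hg⟩ x _
      have hae1 : (fun m => h x m) =ᵐ[(μ : Measure (ProbabilityMeasure (Td d)))]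
          (fun _ => g x) := by
        filter_upwards [hg] with m hm
        rw [happ, hm]
      have hae2 : (fun m => hsq x m) =ᵐ[(μ : Measure (ProbabilityMeasure (Td d)))]
          (fun _ => (g x) ^ 2) := by
        filter_upwards [hg] with m hm
        rw [hsqapp, hm]
      rw [integral_congr_ae hae1, integral_congr_ae hae2, integral_const, integral_const]
      simp [measure_univ]
    · intro hV
      set c : Td d → ℝ := fun x => ∫ m, h x m ∂(μ : Measure (ProbabilityMeasure (Td d)))
        with hcdef
      have hvar : ∀ x ∈ D, ∀ᵐ m ∂(μ : Measure (ProbabilityMeasure (Td d))), f m x = c x := by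
        intro x hx
        set q : ProbabilityMeasure (Td d) →ᵇ ℝ :=
          (h x - BoundedContinuousFunction.const _ (c x))
          * (h x - BoundedContinuousFunction.const _ (c x)) with hqdef
        have hqapp : ∀ m, q m = (f m x - c x) ^ 2 := by
          intro m
          simp [hqdef, happ, sq]
        have hint : Integrable (fun m => h x m) (μ : Measure (ProbabilityMeasure (Td d))) :=
          (h x).integrable _
        have hintsq : Integrable (fun m => hsq x m)
            (μ : Measure (ProbabilityMeasure (Td d))) := (hsq x).integrable _
        have hintq : Integrable (fun m => q m) (μ : Measure (ProbabilityMeasure (Td d))) :=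
          q.integrable _
        have hexp : ∫ m, q m ∂(μ : Measure (ProbabilityMeasure (Td d))) = 0 := by
          have e1 : (fun m => q m) =ᵐ[(μ : Measure (ProbabilityMeasure (Td d)))]
              (fun m => hsq x m - 2 * c x * h x m + (c x) ^ 2) := by
            filter_upwards with m
            rw [hqapp, hsqapp, happ]
            ring
          have hint3 : Integrable (fun m => 2 * c x * h x m)
              (μ : Measure (ProbabilityMeasure (Td d))) := hint.const_mul _
          have hint2 : Integrable (fun m => hsq x m - 2 * c x * h x m)
              (μ : Measure (ProbabilityMeasure (Td d))) := hintsq.sub hint3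
          rw [integral_congr_ae e1, integral_add hint2 (integrable_const _),
            integral_sub hintsq hint3, integral_const, MeasureTheory.integral_const_mul,
            hV x hx]
          simp only [probReal_univ, one_smul]
          ring
        have hq0 : (fun m => q m) =ᵐ[(μ : Measure (ProbabilityMeasure (Td d)))] 0 := by
          refine (integral_eq_zero_iff_of_nonneg ?_ hintq).mp hexp
          intro m
          have hq1 : (0:ℝ) ≤ q m := by
            rw [hqapp]
            exact sq_nonneg _
          exact hq1
        filter_upwards [hq0] with m hm
        have hq : q m = 0 := hm
        rw [hqapp] at hq
        have h2 := pow_eq_zero_iff (n := 2) (by norm_num) |>.mp hq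
        linarith [h2]
      have hall : ∀ᵐ m ∂(μ : Measure (ProbabilityMeasure (Td d))),
          ∀ x ∈ D, f m x = c x := (ae_ball_iff hDcnt).mpr hvar
      haveI : (ae (μ : Measure (ProbabilityMeasure (Td d)))).NeBot :=
        ae_neBot.mpr (IsProbabilityMeasure.ne_zero _)
      obtain ⟨m₀, hm₀⟩ := hall.exists
      refine ⟨f m₀, ?_⟩
      filter_upwards [hall] with m hm
      have hcoe : ⇑(f m) = ⇑(f m₀) :=
        Continuous.ext_on hDdense (f m).continuous (f m₀).continuous
          (fun x hx => by rw [hm x hx, hm₀ x hx])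
      exact DFunLike.coe_injective hcoe
  have hclosed : IsClosed {μ : ProbabilityMeasure (ProbabilityMeasure (Td d)) |
      ∃ g : C(Td d, ℝ), ∀ᵐ m ∂(μ : Measure (ProbabilityMeasure (Td d))), f m = g} := by
    rw [hset]
    exact isClosed_biInter fun x _ =>
      isClosed_eq (hIcont (hsq x)) ((hIcont (h x)).pow 2)
  exact ⟨hclosed, hclosed.isCompact⟩
end

section
/- Let A be a subset of P(P(𝕋^d)) and U, V : A → C(𝕋^d) be continuous maps such that ⟨U(µ) − V(ν), µ − ν⟩ ≥ 0 for all µ, ν ∈ A, where ⟨φ, µ⟩ := ∫_{P(𝕋^d)} ∫_{𝕋^d} φ(x) m(dx) µ(dm). Suppose µ̄ ∈ A and m₁, m₂ ∈ P(𝕋^d) are such that (1−θ)µ̄ + θδ_{m₁} ∈ A and (1−θ)µ̄ + θδ_{m₂} ∈ A for all θ ∈ (0,1). Then ∫_{𝕋^d} (U(µ̄)(x) − V(µ̄)(x)) (m₁ − m₂)(dx) = 0. -/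
open MeasureTheory

section Stmt13Aux

open Filter Topology BoundedContinuousFunction

variable {d : ℕ}

/-- Integration of a continuous function against a probability measure on the (compact) torus
is 1-Lipschitz, hence continuous, in the function. -/
lemma stmt13_cont_int (m : ProbabilityMeasure (Td d)) :
    Continuous fun φ : C(Td d, ℝ) => ∫ x, φ x ∂(m : Measure (Td d)) := by
  have : LipschitzWith 1 fun φ : C(Td d, ℝ) => ∫ x, φ x ∂(m : Measure (Td d)) := by
    intro φ ψ
    rw [edist_dist, edist_dist, dist_eq_norm, dist_eq_norm]
    have hφ : Integrable (fun x => φ x) (m : Measure (Td d)) :=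
      (mkOfCompact φ).integrable _
    have hψ : Integrable (fun x => ψ x) (m : Measure (Td d)) :=
      (mkOfCompact ψ).integrable _
    have h1 : ‖(∫ x, φ x ∂(m : Measure (Td d))) - ∫ x, ψ x ∂(m : Measure (Td d))‖
        ≤ ‖φ - ψ‖ := by
      rw [← integral_sub hφ hψ]
      have := norm_integral_le_of_norm_le_const (μ := (m : Measure (Td d)))
        (f := fun x => φ x - ψ x) (C := ‖φ - ψ‖) ?_
      · simpa using this
      · filter_upwards with x
        simpa using (φ - ψ).norm_coe_le_norm x
    have h2 : dist φ ψ = ‖φ - ψ‖ := dist_eq_norm φ ψ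
    rw [ENNReal.coe_one, one_mul]
    exact ENNReal.ofReal_le_ofReal (by simpa using h1)
  exact this.continuous

/-- The key one-sided inequality. -/
lemma stmt13_key {d : ℕ}
    [MeasurableSpace (ProbabilityMeasure (Td d))]
    [BorelSpace (ProbabilityMeasure (Td d))]
    (A : Set (ProbabilityMeasure (ProbabilityMeasure (Td d))))
    (U V : ProbabilityMeasure (ProbabilityMeasure (Td d)) → C(Td d, ℝ))
    (hU : ContinuousOn U A) (hV : ContinuousOn V A)
    (hmono : ∀ μ ∈ A, ∀ ν ∈ A,
        0 ≤ (∫ m, (∫ x, (U μ x - V ν x) ∂(m : Measure (Td d)))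
                ∂(μ : Measure (ProbabilityMeasure (Td d))))
            - ∫ m, (∫ x, (U μ x - V ν x) ∂(m : Measure (Td d)))
                ∂(ν : Measure (ProbabilityMeasure (Td d))))
    (μbar : ProbabilityMeasure (ProbabilityMeasure (Td d))) (hμbar : μbar ∈ A)
    (m₁ m₂ : ProbabilityMeasure (Td d))
    (h₁ : ∀ θ : ℝ, θ ∈ Set.Ioo (0:ℝ) 1 →
          ∀ μθ : ProbabilityMeasure (ProbabilityMeasure (Td d)),
            (μθ : Measure (ProbabilityMeasure (Td d)))
              = ENNReal.ofReal (1 - θ) • (μbar : Measure (ProbabilityMeasure (Td d)))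
                + ENNReal.ofReal θ • Measure.dirac m₁ → μθ ∈ A)
    (h₂ : ∀ θ : ℝ, θ ∈ Set.Ioo (0:ℝ) 1 →
          ∀ μθ : ProbabilityMeasure (ProbabilityMeasure (Td d)),
            (μθ : Measure (ProbabilityMeasure (Td d)))
              = ENNReal.ofReal (1 - θ) • (μbar : Measure (ProbabilityMeasure (Td d)))
                + ENNReal.ofReal θ • Measure.dirac m₂ → μθ ∈ A) :
    0 ≤ (∫ x, (U μbar x - V μbar x) ∂(m₁ : Measure (Td d)))
          - (∫ x, (U μbar x - V μbar x) ∂(m₂ : Measure (Td d))) := by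
  classical
  -- the sequence of parameters θ n → 0
  set θ : ℕ → ℝ := fun n => 1 / ((n : ℝ) + 2) with hθdef
  have hθmem : ∀ n, θ n ∈ Set.Ioo (0:ℝ) 1 := by
    intro n
    have hn : (0:ℝ) ≤ (n:ℝ) := Nat.cast_nonneg n
    constructor
    · positivity
    · rw [hθdef, div_lt_one (by positivity)]
      linarith
  have hθ0 : Filter.Tendsto θ Filter.atTop (𝓝 0) := by
    have h := (tendsto_one_div_add_atTop_nhds_zero_nat (𝕜 := ℝ)).comp (Filter.tendsto_add_atTop_nat 1)
    refine h.congr fun n => ?_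
    simp only [Function.comp_apply, hθdef]
    push_cast
    ring_nf
  -- the perturbed probability measures
  have prob : ∀ (n : ℕ) (m : (ProbabilityMeasure (Td d))), IsProbabilityMeasure
      (ENNReal.ofReal (1 - θ n) • (μbar : Measure (ProbabilityMeasure (Td d))) + ENNReal.ofReal (θ n) • Measure.dirac m) := by
    intro n m
    obtain ⟨h0, h1'⟩ := hθmem n
    constructor
    simp only [Measure.add_apply, Measure.smul_apply, smul_eq_mul, measure_univ, mul_one]
    rw [← ENNReal.ofReal_add (by linarith) h0.le, sub_add_cancel, ENNReal.ofReal_one]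
  let P : ℕ → (ProbabilityMeasure (Td d)) → ProbabilityMeasure (ProbabilityMeasure (Td d)) := fun n m => ⟨_, prob n m⟩
  have hPcoe : ∀ (n : ℕ) (m : (ProbabilityMeasure (Td d))), ((P n m : ProbabilityMeasure (ProbabilityMeasure (Td d))) : Measure (ProbabilityMeasure (Td d)))
      = ENNReal.ofReal (1 - θ n) • (μbar : Measure (ProbabilityMeasure (Td d)))
        + ENNReal.ofReal (θ n) • Measure.dirac m := fun n m => rfl
  have hA₁ : ∀ n, P n m₁ ∈ A := fun n => h₁ (θ n) (hθmem n) _ (hPcoe n m₁)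
  have hA₂ : ∀ n, P n m₂ ∈ A := fun n => h₂ (θ n) (hθmem n) _ (hPcoe n m₂)
  -- the perturbed measures converge to μbar
  have hPtend : ∀ m : (ProbabilityMeasure (Td d)), Filter.Tendsto (fun n => P n m) Filter.atTop (𝓝 μbar) := by
    intro m
    rw [ProbabilityMeasure.tendsto_iff_forall_integral_tendsto]
    intro f
    have hfint : Integrable f (μbar : Measure (ProbabilityMeasure (Td d))) := f.integrable _
    have hfd : Integrable f (Measure.dirac m) := f.integrable _
    have hval : ∀ n, ∫ ω, f ω ∂(P n m : Measure (ProbabilityMeasure (Td d)))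
        = (1 - θ n) * ∫ ω, f ω ∂(μbar : Measure (ProbabilityMeasure (Td d))) + θ n * f m := by
      intro n
      obtain ⟨h0, h1'⟩ := hθmem n
      rw [hPcoe n m, integral_add_measure (hfint.smul_measure ENNReal.ofReal_ne_top)
        (hfd.smul_measure ENNReal.ofReal_ne_top), integral_smul_measure, integral_smul_measure,
        integral_dirac' _ _ f.continuous.stronglyMeasurable,
        ENNReal.toReal_ofReal (by linarith), ENNReal.toReal_ofReal h0.le,
        smul_eq_mul, smul_eq_mul]
    have hlim : Filter.Tendsto
        (fun n => (1 - θ n) * ∫ ω, f ω ∂(μbar : Measure (ProbabilityMeasure (Td d))) + θ n * f m)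
        Filter.atTop (𝓝 (∫ ω, f ω ∂(μbar : Measure (ProbabilityMeasure (Td d))))) := by
      have hc1 : Filter.Tendsto (fun _ : ℕ => (1:ℝ)) Filter.atTop (𝓝 (1:ℝ)) :=
        tendsto_const_nhds
      have := ((hc1.sub hθ0).mul
        (tendsto_const_nhds (x := ∫ ω, f ω ∂(μbar : Measure (ProbabilityMeasure (Td d)))))).add
        (hθ0.mul (tendsto_const_nhds (x := (f m : ℝ))))
      simpa using this
    exact hlim.congr fun n => (hval n).symm
  -- U, V evaluated along the perturbed measures converge
  have hU1 : Filter.Tendsto (fun n => U (P n m₁)) Filter.atTop (𝓝 (U μbar)) :=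
    (hU μbar hμbar).tendsto.comp
      (tendsto_nhdsWithin_of_tendsto_nhds_of_eventually_within _ (hPtend m₁)
        (Filter.Eventually.of_forall hA₁))
  have hV2 : Filter.Tendsto (fun n => V (P n m₂)) Filter.atTop (𝓝 (V μbar)) :=
    (hV μbar hμbar).tendsto.comp
      (tendsto_nhdsWithin_of_tendsto_nhds_of_eventually_within _ (hPtend m₂)
        (Filter.Eventually.of_forall hA₂))
  have hφtend : Filter.Tendsto (fun n => U (P n m₁) - V (P n m₂)) Filter.atTop
      (𝓝 (U μbar - V μbar)) := hU1.sub hV2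
  -- convergence of the integrals against m₁ and m₂
  have hItend : ∀ m : (ProbabilityMeasure (Td d)), Filter.Tendsto
      (fun n => ∫ x, (U (P n m₁) - V (P n m₂)) x ∂(m : Measure (Td d)))
      Filter.atTop (𝓝 (∫ x, (U μbar - V μbar) x ∂(m : Measure (Td d)))) :=
    fun m => ((stmt13_cont_int m).tendsto _).comp hφtend
  -- nonnegativity along the sequence
  have hFn : ∀ n, 0 ≤ (∫ x, (U (P n m₁) - V (P n m₂)) x ∂(m₁ : Measure (Td d)))
      - ∫ x, (U (P n m₁) - V (P n m₂)) x ∂(m₂ : Measure (Td d)) := by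
    intro n
    obtain ⟨h0, h1'⟩ := hθmem n
    have hm := hmono (P n m₁) (hA₁ n) (P n m₂) (hA₂ n)
    set φ : C(Td d, ℝ) := U (P n m₁) - V (P n m₂) with hφdef
    have hφeq : ∀ x, U (P n m₁) x - V (P n m₂) x = φ x := fun x => rfl
    set g : (ProbabilityMeasure (Td d)) → ℝ := fun m => ∫ x, φ x ∂(m : Measure (Td d)) with hgdef
    have hgc : Continuous g := by
      have := ProbabilityMeasure.continuous_integral_boundedContinuousFunction
        (X := Td d) (BoundedContinuousFunction.mkOfCompact φ)
      simpa [hgdef] using this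
    have hgbd : ∀ m : (ProbabilityMeasure (Td d)), ‖g m‖ ≤ ‖BoundedContinuousFunction.mkOfCompact φ‖ := by
      intro m
      have := norm_integral_le_of_norm_le_const (μ := (m : Measure (Td d)))
        (f := fun x => φ x) (C := ‖BoundedContinuousFunction.mkOfCompact φ‖) ?_
      · simpa [hgdef] using this
      · filter_upwards with x
        exact (BoundedContinuousFunction.mkOfCompact φ).norm_coe_le_norm x
    have hgint : ∀ ρ : Measure (ProbabilityMeasure (Td d)), IsFiniteMeasure ρ → Integrable g ρ := by
      intro ρ hρ
      exact Integrable.mono' (integrable_const _) hgc.aestronglyMeasurable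
        (Filter.Eventually.of_forall hgbd)
    have hval : ∀ m : (ProbabilityMeasure (Td d)), ∫ ω, g ω ∂(P n m : Measure (ProbabilityMeasure (Td d)))
        = (1 - θ n) * ∫ ω, g ω ∂(μbar : Measure (ProbabilityMeasure (Td d))) + θ n * g m := by
      intro m
      rw [hPcoe n m, integral_add_measure
        ((hgint _ inferInstance).smul_measure ENNReal.ofReal_ne_top)
        ((hgint _ inferInstance).smul_measure ENNReal.ofReal_ne_top),
        integral_smul_measure, integral_smul_measure,
        integral_dirac' _ _ hgc.stronglyMeasurable,
        ENNReal.toReal_ofReal (by linarith), ENNReal.toReal_ofReal h0.le,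
        smul_eq_mul, smul_eq_mul]
    have hm' : 0 ≤ θ n * (g m₁ - g m₂) := by
      have e1 : (∫ m, (∫ x, (U (P n m₁) x - V (P n m₂) x) ∂(m : Measure (Td d)))
          ∂(P n m₁ : Measure (ProbabilityMeasure (Td d)))) = ∫ ω, g ω ∂(P n m₁ : Measure (ProbabilityMeasure (Td d))) := by
        simp only [hφeq]
        rfl
      have e2 : (∫ m, (∫ x, (U (P n m₁) x - V (P n m₂) x) ∂(m : Measure (Td d)))
          ∂(P n m₂ : Measure (ProbabilityMeasure (Td d)))) = ∫ ω, g ω ∂(P n m₂ : Measure (ProbabilityMeasure (Td d))) := by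
        simp only [hφeq]
        rfl
      rw [e1, e2, hval m₁, hval m₂] at hm
      nlinarith [hm]
    have : 0 ≤ g m₁ - g m₂ := nonneg_of_mul_nonneg_right hm' h0
    simpa [hgdef, hφeq] using this
  -- pass to the limit
  have hlim := ge_of_tendsto' ((hItend m₁).sub (hItend m₂)) hFn
  have heq : ∀ m : (ProbabilityMeasure (Td d)), (∫ x, (U μbar - V μbar) x ∂(m : Measure (Td d)))
      = ∫ x, (U μbar x - V μbar x) ∂(m : Measure (Td d)) := by
    intro m
    simp
  rw [heq m₁, heq m₂] at hlim
  exact hlim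

end Stmt13Aux

/-- Let `A ⊆ P(P(𝕋^d))` and `U, V : A → C(𝕋^d)` be continuous with
`⟨U(µ) − V(ν), µ − ν⟩ ≥ 0` on `A`, where `⟨φ, µ⟩ = ∫∫ φ(x) m(dx) µ(dm)`.  If `µ̄ ∈ A` and
`m₁, m₂ ∈ P(𝕋^d)` are such that `(1−θ)µ̄ + θδ_{mᵢ} ∈ A` for all `θ ∈ (0,1)`, then
`∫ (U(µ̄) − V(µ̄)) d(m₁ − m₂) = 0`. -/
theorem stmt13 {d : ℕ} :
    letI : MeasurableSpace (ProbabilityMeasure (Td d)) := borel _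
    haveI : BorelSpace (ProbabilityMeasure (Td d)) := ⟨rfl⟩
    ∀ (A : Set (ProbabilityMeasure (ProbabilityMeasure (Td d))))
      (U V : ProbabilityMeasure (ProbabilityMeasure (Td d)) → C(Td d, ℝ)),
      ContinuousOn U A → ContinuousOn V A →
      (∀ μ ∈ A, ∀ ν ∈ A,
        0 ≤ (∫ m, (∫ x, (U μ x - V ν x) ∂(m : Measure (Td d)))
                ∂(μ : Measure (ProbabilityMeasure (Td d))))
            - ∫ m, (∫ x, (U μ x - V ν x) ∂(m : Measure (Td d)))
                ∂(ν : Measure (ProbabilityMeasure (Td d)))) →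
      ∀ μbar ∈ A, ∀ m₁ m₂ : ProbabilityMeasure (Td d),
        (∀ θ : ℝ, θ ∈ Set.Ioo (0:ℝ) 1 →
          ∀ μθ : ProbabilityMeasure (ProbabilityMeasure (Td d)),
            (μθ : Measure (ProbabilityMeasure (Td d)))
              = ENNReal.ofReal (1 - θ) • (μbar : Measure (ProbabilityMeasure (Td d)))
                + ENNReal.ofReal θ • Measure.dirac m₁ → μθ ∈ A) →
        (∀ θ : ℝ, θ ∈ Set.Ioo (0:ℝ) 1 →
          ∀ μθ : ProbabilityMeasure (ProbabilityMeasure (Td d)),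
            (μθ : Measure (ProbabilityMeasure (Td d)))
              = ENNReal.ofReal (1 - θ) • (μbar : Measure (ProbabilityMeasure (Td d)))
                + ENNReal.ofReal θ • Measure.dirac m₂ → μθ ∈ A) →
        (∫ x, (U μbar x - V μbar x) ∂(m₁ : Measure (Td d)))
          - (∫ x, (U μbar x - V μbar x) ∂(m₂ : Measure (Td d))) = 0 := by
  intro A U V hU hV hmono μbar hμbar m₁ m₂ h₁ h₂
  letI : MeasurableSpace (ProbabilityMeasure (Td d)) := borel _
  haveI : BorelSpace (ProbabilityMeasure (Td d)) := ⟨rfl⟩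
  have key₁ := stmt13_key A U V hU hV hmono μbar hμbar m₁ m₂ h₁ h₂
  have key₂ := stmt13_key A U V hU hV hmono μbar hμbar m₂ m₁ h₂ h₁
  linarith
end
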